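/- Energy increment lemma: for every δ > 0 there is c(δ) > 0 such that the following holds. Let B be a partition of [N] into at most M cells and f : [N] → [-1,1] with ‖f - E(f|B)‖_{U²([N])} ≥ δ. Then there exists a refinement B′ of B with at most 2M cells such that ‖E(f|B′)‖₂² - ‖E(f|B)‖₂² ≥ c(δ). -/

import Mathlib

open Finset Complex
open scoped Classical

/-- The fourth power of the Gowers `U²(ℤ/Mℤ)` norm. -/
noncomputable def U2p4 (M : ℕ) [NeZero M] (f : ZMod M → ℂ) : ℂ :=
  (1 / (M : ℂ) ^ 3) * ∑ a : ZMod M, ∑ h₁ : ZMod M, ∑ h₂ : ZMod M,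
    f a * (starRingEnd ℂ) (f (a + h₁)) * (starRingEnd ℂ) (f (a + h₂)) * f (a + h₁ + h₂)

/-- The `U²(ℤ/Mℤ)` norm. -/
noncomputable def u2norm (M : ℕ) [NeZero M] (f : ZMod M → ℂ) : ℝ :=
  (U2p4 M f).re ^ ((1 : ℝ) / 4)

/-- Extend a function on `[N]` by zero to `ℤ/Mℤ`. -/
def extendZ (N M : ℕ) (f : ℕ → ℂ) : ZMod M → ℂ :=
  fun x => if 1 ≤ x.val ∧ x.val ≤ N then f x.val else 0

/-- The normalized `U²([N])` norm (via `M = 2N + 2 ≥ 2N`). -/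
noncomputable def U2N (N : ℕ) (f : ℕ → ℂ) : ℝ :=
  u2norm (2 * N + 1 + 1) (extendZ N (2 * N + 1 + 1) f) /
    u2norm (2 * N + 1 + 1) (extendZ N (2 * N + 1 + 1) (fun _ => 1))

/-- Conditional expectation with respect to the partition of `[N]` induced by `π`. -/
noncomputable def condExpPart {α : Type*} (N : ℕ) (π : ℕ → α) (f : ℕ → ℝ) (x : ℕ) : ℝ :=
  (∑ y ∈ (Finset.Icc 1 N).filter (fun y => π y = π x), f y) /
    (((Finset.Icc 1 N).filter (fun y => π y = π x)).card : ℝ)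

/-- The energy `E(B) = ‖E(f|B)‖₂²`. -/
noncomputable def energy {α : Type*} (N : ℕ) (π : ℕ → α) (f : ℕ → ℝ) : ℝ :=
  (1 / (N : ℝ)) * ∑ x ∈ Finset.Icc 1 N, (condExpPart N π f x) ^ 2

/-- Energy increment lemma: if `‖f - E(f|B)‖_{U²([N])} ≥ δ` for a partition `B` of
`[N]` into at most `M` cells, then some refinement `B′` with at most `2M` cells has
energy at least `c(δ)` larger. -/
lemma rpow_quarter_le_abs (x : ℝ) : x ^ ((1:ℝ)/4) ≤ |x| ^ ((1:ℝ)/4) := by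
  rcases le_or_gt 0 x with hx | hx
  · rw [_root_.abs_of_nonneg hx]
  · rw [Real.rpow_def_of_neg hx, _root_.abs_of_neg hx,
      Real.rpow_def_of_pos (by linarith : (0:ℝ) < -x), Real.log_neg_eq_log]
    have h1 : Real.cos (1/4 * Real.pi) ≤ 1 := Real.cos_le_one _
    have h2 : (0:ℝ) ≤ Real.exp (Real.log x * (1/4)) := (Real.exp_pos _).le
    nlinarith [Real.exp_pos (Real.log x * (1/4))]

lemma extendZ_norm_le {N M : ℕ} [NeZero M] {g : ℕ → ℝ} (hg : ∀ n ∈ Finset.Icc 1 N, |g n| ≤ 2) :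
    ∀ x : ZMod M, ‖extendZ N M (fun n => (g n : ℂ)) x‖ ≤ 2 := by
  intro x
  unfold extendZ
  split_ifs with h
  · rw [Complex.norm_real]
    exact hg _ (Finset.mem_Icc.2 ⟨h.1, h.2⟩)
  · simp

lemma sum_extendZ_norm_le {N M : ℕ} [NeZero M] (g : ℕ → ℝ) :
    ∑ a : ZMod M, ‖extendZ N M (fun n => (g n : ℂ)) a‖ ≤ ∑ n ∈ Finset.Icc 1 N, |g n| := by
  classical
  have h1 : ∀ a : ZMod M, ‖extendZ N M (fun n => (g n : ℂ)) a‖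
      = if 1 ≤ a.val ∧ a.val ≤ N then |g a.val| else 0 := by
    intro a
    unfold extendZ
    split_ifs <;> simp [Complex.norm_real]
  simp_rw [h1]
  rw [← Finset.sum_filter]
  refine le_trans (le_of_eq (Finset.sum_image (f := fun n => |g n|) (g := ZMod.val)
    (fun x _ y _ h => ZMod.val_injective M h)).symm) ?_
  refine Finset.sum_le_sum_of_subset_of_nonneg ?_ (fun n _ _ => abs_nonneg _)
  intro n hn
  rw [Finset.mem_image] at hn
  obtain ⟨a, ha, rfl⟩ := hn
  rw [Finset.mem_filter] at ha
  exact Finset.mem_Icc.2 ⟨ha.2.1, ha.2.2⟩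

lemma abs_U2p4_re_le {N M : ℕ} [NeZero M] (g : ℕ → ℝ) (hg : ∀ n ∈ Finset.Icc 1 N, |g n| ≤ 2) :
    |(U2p4 M (extendZ N M (fun n => (g n : ℂ)))).re|
      ≤ (8 / (M:ℝ)) * ∑ n ∈ Finset.Icc 1 N, |g n| := by
  classical
  set G : ZMod M → ℂ := extendZ N M (fun n => (g n : ℂ)) with hG
  have hb : ∀ x : ZMod M, ‖G x‖ ≤ 2 := extendZ_norm_le hg
  have hM : (0:ℝ) < M := by
    have := NeZero.pos M
    exact_mod_cast this
  have hterm : ∀ a h₁ h₂ : ZMod M,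
      ‖G a * (starRingEnd ℂ) (G (a + h₁)) * (starRingEnd ℂ) (G (a + h₂)) * G (a + h₁ + h₂)‖
        ≤ 8 * ‖G a‖ := by
    intro a h₁ h₂
    calc ‖G a * (starRingEnd ℂ) (G (a + h₁)) * (starRingEnd ℂ) (G (a + h₂)) * G (a + h₁ + h₂)‖
        = ‖G a‖ * ‖G (a + h₁)‖ * ‖G (a + h₂)‖ * ‖G (a + h₁ + h₂)‖ := by
          rw [norm_mul, norm_mul, norm_mul, RCLike.norm_conj, RCLike.norm_conj]
      _ ≤ ‖G a‖ * 2 * 2 * 2 := by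
          gcongr <;> first | exact hb _ | positivity
      _ = 8 * ‖G a‖ := by ring
  have h1 : |(U2p4 M G).re| ≤ ‖U2p4 M G‖ := Complex.abs_re_le_norm _
  have h2 : ‖U2p4 M G‖ ≤ (1 / (M:ℝ)^3) * ((M:ℝ)^2 * ∑ a : ZMod M, 8 * ‖G a‖) := by
    unfold U2p4
    rw [norm_mul]
    have hc : ‖1 / ((M:ℂ))^3‖ = 1 / (M:ℝ)^3 := by
      rw [norm_div, norm_pow, norm_one, Complex.norm_natCast]
    rw [hc]
    have h3 : ‖∑ a : ZMod M, ∑ h₁ : ZMod M, ∑ h₂ : ZMod M,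
        G a * (starRingEnd ℂ) (G (a + h₁)) * (starRingEnd ℂ) (G (a + h₂)) * G (a + h₁ + h₂)‖
        ≤ (M:ℝ)^2 * ∑ a : ZMod M, 8 * ‖G a‖ := by
      refine le_trans (norm_sum_le _ _) ?_
      rw [Finset.mul_sum]
      refine Finset.sum_le_sum fun a _ => ?_
      refine le_trans (norm_sum_le _ _) ?_
      have h4 : ∀ h₁ : ZMod M, ‖∑ h₂ : ZMod M,
          G a * (starRingEnd ℂ) (G (a + h₁)) * (starRingEnd ℂ) (G (a + h₂)) * G (a + h₁ + h₂)‖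
          ≤ (M:ℝ) * (8 * ‖G a‖) := by
        intro h₁
        refine le_trans (norm_sum_le _ _) ?_
        refine le_trans (Finset.sum_le_sum fun h₂ _ => hterm a h₁ h₂) ?_
        rw [Finset.sum_const, nsmul_eq_mul, Finset.card_univ, ZMod.card]
      refine le_trans (Finset.sum_le_sum fun h₁ _ => h4 h₁) ?_
      rw [Finset.sum_const, nsmul_eq_mul, Finset.card_univ, ZMod.card]
      ring_nf
      exact le_refl _
    exact mul_le_mul_of_nonneg_left h3 (by positivity)
  have h5 : ∑ a : ZMod M, 8 * ‖G a‖ ≤ 8 * ∑ n ∈ Finset.Icc 1 N, |g n| := by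
    rw [← Finset.mul_sum]
    have := sum_extendZ_norm_le (N := N) (M := M) g
    nlinarith [this]
  calc |(U2p4 M G).re| ≤ (1 / (M:ℝ)^3) * ((M:ℝ)^2 * ∑ a : ZMod M, 8 * ‖G a‖) := le_trans h1 h2
    _ ≤ (1 / (M:ℝ)^3) * ((M:ℝ)^2 * (8 * ∑ n ∈ Finset.Icc 1 N, |g n|)) := by
        refine mul_le_mul_of_nonneg_left (mul_le_mul_of_nonneg_left h5 (by positivity)) (by positivity)
    _ = (8 / (M:ℝ)) * ∑ n ∈ Finset.Icc 1 N, |g n| := by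
        field_simp

lemma den_re_lower (N : ℕ) (hN : 0 < N) :
    (1:ℝ)/2048 ≤ (U2p4 (2*N+1+1) (extendZ N (2*N+1+1) (fun _ => (1:ℂ)))).re := by
  classical
  set M : ℕ := 2*N+1+1 with hM
  have hMN : N < M := by omega
  have hMpos : (0:ℝ) < M := by positivity
  set E : ZMod M → ℂ := extendZ N M (fun _ => (1:ℂ)) with hE
  set q : ℕ := N - 2*(N/4) with hq
  set r : ℕ := N/4 with hr
  have hq1 : 1 ≤ q := by omega
  have hqrN : q + 2*r ≤ N := by omega
  -- the term is an indicator
  have hterm : ∀ a h₁ h₂ : ZMod M,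
      (0:ℝ) ≤ (E a * (starRingEnd ℂ) (E (a + h₁)) * (starRingEnd ℂ) (E (a + h₂))
        * E (a + h₁ + h₂)).re := by
    intro a h₁ h₂
    simp only [hE, extendZ]
    split_ifs <;> simp
  have hgood : ∀ i j k : ℕ, 1 ≤ i → i + j + k ≤ N →
      ((E (↑i) * (starRingEnd ℂ) (E ((↑i : ZMod M) + ↑j)) * (starRingEnd ℂ) (E ((↑i : ZMod M) + ↑k))
        * E ((↑i : ZMod M) + ↑j + ↑k)).re) = 1 := by
    intro i j k hi hik
    have e1 : (↑i : ZMod M) + ↑j = ((i + j : ℕ) : ZMod M) := by push_cast; ring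
    have e2 : (↑i : ZMod M) + ↑k = ((i + k : ℕ) : ZMod M) := by push_cast; ring
    have e3 : (↑i : ZMod M) + ↑j + ↑k = ((i + j + k : ℕ) : ZMod M) := by push_cast; ring
    rw [e3, e1, e2]
    have v0 : ((i : ZMod M)).val = i := ZMod.val_cast_of_lt (by omega)
    have v1 : (((i + j : ℕ) : ZMod M)).val = i + j := ZMod.val_cast_of_lt (by omega)
    have v2 : (((i + k : ℕ) : ZMod M)).val = i + k := ZMod.val_cast_of_lt (by omega)
    have v3 : (((i + j + k : ℕ) : ZMod M)).val = i + j + k := ZMod.val_cast_of_lt (by omega)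
    simp only [hE, extendZ, v0, v1, v2, v3]
    rw [if_pos ⟨hi, by omega⟩, if_pos ⟨by omega, by omega⟩, if_pos ⟨by omega, by omega⟩,
      if_pos ⟨by omega, by omega⟩]
    simp
  have hinj : ∀ (s : Finset ℕ), (∀ i ∈ s, i ≤ N) →
      (∀ x ∈ s, ∀ y ∈ s, (x : ZMod M) = (y : ZMod M) → x = y) := by
    intro s hs x hx y hy h
    have := congrArg ZMod.val h
    rwa [ZMod.val_cast_of_lt (by have := hs x hx; omega),
      ZMod.val_cast_of_lt (by have := hs y hy; omega)] at this
  -- innermost bound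
  have lvl2 : ∀ i j : ℕ, i ∈ Finset.Icc 1 q → j ∈ Finset.Icc 0 r →
      ((r:ℝ) + 1) ≤ ∑ h₂ : ZMod M,
        (E (↑i) * (starRingEnd ℂ) (E ((↑i : ZMod M) + ↑j)) * (starRingEnd ℂ) (E ((↑i : ZMod M) + h₂))
          * E ((↑i : ZMod M) + ↑j + h₂)).re := by
    intro i j hi hj
    rw [Finset.mem_Icc] at hi hj
    refine le_trans ?_ (Finset.sum_le_sum_of_subset_of_nonneg
      (Finset.subset_univ ((Finset.Icc 0 r).image (Nat.cast : ℕ → ZMod M)))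
      (fun x _ _ => hterm _ _ _))
    rw [Finset.sum_image (hinj _ (fun k hk => by rw [Finset.mem_Icc] at hk; omega))]
    have hone : ∀ k ∈ Finset.Icc 0 r,
        (E (↑i) * (starRingEnd ℂ) (E ((↑i : ZMod M) + ↑j)) * (starRingEnd ℂ) (E ((↑i : ZMod M) + (↑k : ZMod M)))
          * E ((↑i : ZMod M) + ↑j + (↑k : ZMod M))).re = 1 := by
      intro k hk
      rw [Finset.mem_Icc] at hk
      exact hgood i j k (by omega) (by omega)
    rw [Finset.sum_congr rfl hone, Finset.sum_const, nsmul_eq_mul, Nat.card_Icc]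
    push_cast
    ring_nf
    exact le_refl _
  have lvl1 : ∀ i : ℕ, i ∈ Finset.Icc 1 q →
      ((r:ℝ) + 1)^2 ≤ ∑ h₁ : ZMod M, ∑ h₂ : ZMod M,
        (E (↑i) * (starRingEnd ℂ) (E ((↑i : ZMod M) + h₁)) * (starRingEnd ℂ) (E ((↑i : ZMod M) + h₂))
          * E ((↑i : ZMod M) + h₁ + h₂)).re := by
    intro i hi
    refine le_trans ?_ (Finset.sum_le_sum_of_subset_of_nonneg
      (Finset.subset_univ ((Finset.Icc 0 r).image (Nat.cast : ℕ → ZMod M)))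
      (fun x _ _ => Finset.sum_nonneg (fun h₂ _ => hterm _ _ _)))
    rw [Finset.sum_image (hinj _ (fun k hk => by rw [Finset.mem_Icc] at hk; omega))]
    refine le_trans ?_ (Finset.sum_le_sum (fun j hj => lvl2 i j hi hj))
    rw [Finset.sum_const, nsmul_eq_mul, Nat.card_Icc]
    push_cast
    ring_nf
    exact le_refl _
  have lvl0 : (q:ℝ) * ((r:ℝ) + 1)^2 ≤ ∑ a : ZMod M, ∑ h₁ : ZMod M, ∑ h₂ : ZMod M,
      (E a * (starRingEnd ℂ) (E (a + h₁)) * (starRingEnd ℂ) (E (a + h₂))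
        * E (a + h₁ + h₂)).re := by
    refine le_trans ?_ (Finset.sum_le_sum_of_subset_of_nonneg
      (Finset.subset_univ ((Finset.Icc 1 q).image (Nat.cast : ℕ → ZMod M)))
      (fun x _ _ => Finset.sum_nonneg (fun h₁ _ => Finset.sum_nonneg (fun h₂ _ => hterm _ _ _))))
    rw [Finset.sum_image (hinj _ (fun k hk => by rw [Finset.mem_Icc] at hk; omega))]
    refine le_trans ?_ (Finset.sum_le_sum (fun i hi => lvl1 i hi))
    rw [Finset.sum_const, nsmul_eq_mul, Nat.card_Icc]
    push_cast
    ring_nf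
    exact le_refl _
  -- compute the real part of U2p4
  have hre : (U2p4 M E).re
      = (1 / (M:ℝ)^3) * ∑ a : ZMod M, ∑ h₁ : ZMod M, ∑ h₂ : ZMod M,
        (E a * (starRingEnd ℂ) (E (a + h₁)) * (starRingEnd ℂ) (E (a + h₂))
          * E (a + h₁ + h₂)).re := by
    unfold U2p4
    have hcast : (1 / ((M:ℂ))^3) = (((1 / (M:ℝ)^3 : ℝ)) : ℂ) := by push_cast; ring
    rw [hcast, Complex.re_ofReal_mul]
    congr 1
    rw [Complex.re_sum]
    refine Finset.sum_congr rfl fun a _ => ?_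
    rw [Complex.re_sum]
    refine Finset.sum_congr rfl fun h₁ _ => ?_
    rw [Complex.re_sum]
  rw [hre]
  -- final numeric inequality
  have hq0 : (0:ℝ) ≤ (q:ℝ) := Nat.cast_nonneg _
  have hr0 : (0:ℝ) ≤ (r:ℝ) := Nat.cast_nonneg _
  have hnat : ((M:ℕ):ℝ)^3 ≤ 2048 * ((q:ℝ) * ((r:ℝ)+1)^2) := by
    have f1 : (N:ℝ) ≤ 2 * (q:ℝ) := by
      have : N ≤ 2*q := by omega
      exact_mod_cast this
    have f2 : ((N:ℝ)+1) ≤ 4 * ((r:ℝ)+1) := by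
      have : N + 1 ≤ 4*(r+1) := by omega
      exact_mod_cast this
    have f3 : (1:ℝ) ≤ N := by exact_mod_cast hN
    have e1 : ((N:ℝ)+1)^2 ≤ (4*((r:ℝ)+1))^2 :=
      pow_le_pow_left₀ (by positivity) f2 2
    have e2 : ((N:ℝ)+1)^3 ≤ (2*(N:ℝ)) * (16*((r:ℝ)+1)^2) := by
      have h8 : ((N:ℝ)+1)^3 = ((N:ℝ)+1) * ((N:ℝ)+1)^2 := by ring
      rw [h8]
      have hN1 : ((N:ℝ)+1) ≤ 2*(N:ℝ) := by linarith
      have : (4*((r:ℝ)+1))^2 = 16*((r:ℝ)+1)^2 := by ring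
      rw [← this]
      exact mul_le_mul hN1 e1 (by positivity) (by positivity)
    have e3 : (2*(N:ℝ)) * (16*((r:ℝ)+1)^2) ≤ (4*(q:ℝ)) * (16*((r:ℝ)+1)^2) := by
      nlinarith [sq_nonneg ((r:ℝ)+1), f1]
    have hMc : ((M:ℕ):ℝ) = 2*(N:ℝ)+2 := by rw [hM]; push_cast; ring
    rw [hMc]
    nlinarith [e2, e3, sq_nonneg ((r:ℝ)+1), mul_nonneg hq0 (sq_nonneg ((r:ℝ)+1)),
      mul_nonneg (mul_nonneg hq0 hr0) hr0, mul_nonneg hq0 hr0]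
  have h7 : (0:ℝ) < (M:ℝ)^3 := by positivity
  calc (1:ℝ)/2048 ≤ (1 / (M:ℝ)^3) * ((q:ℝ) * ((r:ℝ)+1)^2) := by
        rw [one_div_mul_eq_div, div_le_div_iff₀ (by norm_num) h7]
        linarith [hnat]
    _ ≤ _ := mul_le_mul_of_nonneg_left lvl0 (by positivity)

lemma l1_lower {N : ℕ} (hN : 0 < N) {δ : ℝ} (hδ : 0 < δ) {g : ℕ → ℝ}
    (hg : ∀ n ∈ Finset.Icc 1 N, |g n| ≤ 2)
    (hU : δ ≤ U2N N (fun n => ((g n : ℝ) : ℂ))) :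
    δ^4 / 8192 ≤ (1 / (N:ℝ)) * ∑ n ∈ Finset.Icc 1 N, |g n| := by
  classical
  set M : ℕ := 2*N+1+1 with hM
  set X : ℝ := (U2p4 M (extendZ N M (fun n => ((g n : ℝ) : ℂ)))).re with hX
  set Y : ℝ := (U2p4 M (extendZ N M (fun _ => (1:ℂ)))).re with hY
  have hYlb : (1:ℝ)/2048 ≤ Y := den_re_lower N hN
  have hY0 : (0:ℝ) ≤ Y := by linarith
  have hden : u2norm M (extendZ N M (fun _ => (1:ℂ))) = Y ^ ((1:ℝ)/4) := rfl
  have hnum : u2norm M (extendZ N M (fun n => ((g n : ℝ) : ℂ))) = X ^ ((1:ℝ)/4) := rfl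
  have hdenlb : ((1:ℝ)/2048) ^ ((1:ℝ)/4) ≤ Y ^ ((1:ℝ)/4) :=
    Real.rpow_le_rpow (by norm_num) hYlb (by norm_num)
  have hdenpos : (0:ℝ) < Y ^ ((1:ℝ)/4) :=
    lt_of_lt_of_le (Real.rpow_pos_of_pos (by norm_num) _) hdenlb
  have hU' : δ * (Y ^ ((1:ℝ)/4)) ≤ X ^ ((1:ℝ)/4) := by
    have := hU
    unfold U2N at this
    rw [hnum, hden] at this
    rw [le_div_iff₀ hdenpos] at this
    exact this
  have hkey : δ * ((1:ℝ)/2048) ^ ((1:ℝ)/4) ≤ |X| ^ ((1:ℝ)/4) := by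
    calc δ * ((1:ℝ)/2048) ^ ((1:ℝ)/4) ≤ δ * (Y ^ ((1:ℝ)/4)) :=
          mul_le_mul_of_nonneg_left hdenlb hδ.le
      _ ≤ X ^ ((1:ℝ)/4) := hU'
      _ ≤ |X| ^ ((1:ℝ)/4) := rpow_quarter_le_abs X
  -- raise to the fourth power
  have hpow : (δ * ((1:ℝ)/2048) ^ ((1:ℝ)/4))^4 ≤ (|X| ^ ((1:ℝ)/4))^4 :=
    pow_le_pow_left₀ (by positivity) hkey 4
  have h4X : (|X| ^ ((1:ℝ)/4))^4 = |X| := by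
    rw [← Real.rpow_natCast (|X| ^ ((1:ℝ)/4)) 4, ← Real.rpow_mul (abs_nonneg X)]
    norm_num
  have h4c : (((1:ℝ)/2048) ^ ((1:ℝ)/4))^4 = 1/2048 := by
    rw [← Real.rpow_natCast (((1:ℝ)/2048) ^ ((1:ℝ)/4)) 4, ← Real.rpow_mul (by norm_num)]
    norm_num
  have hXlb : δ^4 * (1/2048) ≤ |X| := by
    rw [← h4c]
    calc δ^4 * (((1:ℝ)/2048) ^ ((1:ℝ)/4))^4 = (δ * ((1:ℝ)/2048) ^ ((1:ℝ)/4))^4 := by ring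
      _ ≤ |X| := by rw [← h4X]; exact hpow
  -- upper bound on |X|
  have hXub : |X| ≤ (8 / (M:ℝ)) * ∑ n ∈ Finset.Icc 1 N, |g n| := abs_U2p4_re_le g hg
  have hM2N : (8 / (M:ℝ)) ≤ 4 / (N:ℝ) := by
    have hNpos : (0:ℝ) < N := by exact_mod_cast hN
    rw [div_le_div_iff₀ (by positivity) hNpos]
    have : ((M:ℕ):ℝ) = 2*(N:ℝ)+2 := by rw [hM]; push_cast; ring
    rw [this]
    linarith
  have hsum0 : (0:ℝ) ≤ ∑ n ∈ Finset.Icc 1 N, |g n| :=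
    Finset.sum_nonneg fun n _ => abs_nonneg _
  have hfinal : δ^4 * (1/2048) ≤ (4 / (N:ℝ)) * ∑ n ∈ Finset.Icc 1 N, |g n| := by
    calc δ^4 * (1/2048) ≤ |X| := hXlb
      _ ≤ (8 / (M:ℝ)) * ∑ n ∈ Finset.Icc 1 N, |g n| := hXub
      _ ≤ (4 / (N:ℝ)) * ∑ n ∈ Finset.Icc 1 N, |g n| :=
          mul_le_mul_of_nonneg_right hM2N hsum0
  have hNpos : (0:ℝ) < N := by exact_mod_cast hN
  have : (4 / (N:ℝ)) * ∑ n ∈ Finset.Icc 1 N, |g n|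
      = 4 * ((1 / (N:ℝ)) * ∑ n ∈ Finset.Icc 1 N, |g n|) := by ring
  rw [this] at hfinal
  linarith

lemma condExpPart_congr {α : Type*} {N : ℕ} {π : ℕ → α} (f : ℕ → ℝ) {x y : ℕ}
    (h : π x = π y) : condExpPart N π f x = condExpPart N π f y := by
  unfold condExpPart
  rw [h]

lemma cell_card_pos {α : Type*} {N : ℕ} {π : ℕ → α} {x : ℕ} (hx : x ∈ Finset.Icc 1 N) :
    0 < ((Finset.Icc 1 N).filter (fun y => π y = π x)).card :=
  Finset.card_pos.2 ⟨x, Finset.mem_filter.2 ⟨hx, rfl⟩⟩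

lemma sum_cell_sub {α : Type*} {N : ℕ} {π : ℕ → α} (f : ℕ → ℝ) {x : ℕ}
    (hx : x ∈ Finset.Icc 1 N) :
    ∑ y ∈ (Finset.Icc 1 N).filter (fun y => π y = π x),
      (f y - condExpPart N π f y) = 0 := by
  have hc : (0:ℝ) < ((Finset.Icc 1 N).filter (fun y => π y = π x)).card := by
    exact_mod_cast cell_card_pos (π := π) hx
  rw [Finset.sum_sub_distrib]
  have h2 : ∑ y ∈ (Finset.Icc 1 N).filter (fun y => π y = π x), condExpPart N π f y
      = (((Finset.Icc 1 N).filter (fun y => π y = π x)).card : ℝ) * condExpPart N π f x := by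
    rw [Finset.sum_congr rfl (fun y hy => condExpPart_congr f (Finset.mem_filter.1 hy).2),
      Finset.sum_const, nsmul_eq_mul]
  rw [h2]
  unfold condExpPart
  field_simp
  simp

lemma condExpPart_sub_self {α : Type*} {N : ℕ} {π : ℕ → α} (f : ℕ → ℝ) {x : ℕ}
    (hx : x ∈ Finset.Icc 1 N) :
    condExpPart N π (fun n => f n - condExpPart N π f n) x = 0 := by
  have := sum_cell_sub (π := π) f hx
  simp only [condExpPart] at this ⊢
  rw [this, zero_div]

lemma condExpPart_sub {α : Type*} {N : ℕ} (π : ℕ → α) (a b : ℕ → ℝ) (x : ℕ) :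
    condExpPart N π (fun n => a n - b n) x
      = condExpPart N π a x - condExpPart N π b x := by
  simp only [condExpPart, Finset.sum_sub_distrib, sub_div]

lemma condExpPart_const_on_cell {α : Type*} {N : ℕ} {π : ℕ → α} {b : ℕ → ℝ} {x : ℕ}
    (hx : x ∈ Finset.Icc 1 N)
    (h : ∀ y ∈ Finset.Icc 1 N, π y = π x → b y = b x) :
    condExpPart N π b x = b x := by
  classical
  have hc : (0:ℝ) < (((Finset.Icc 1 N).filter (fun y => π y = π x)).card : ℝ) :=
    Nat.cast_pos.mpr (Finset.card_pos.2 ⟨x, Finset.mem_filter.2 ⟨hx, rfl⟩⟩)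
  simp only [condExpPart]
  rw [Finset.sum_congr rfl
    (fun y hy => h y (Finset.mem_filter.1 hy).1 (Finset.mem_filter.1 hy).2),
    Finset.sum_const, nsmul_eq_mul]
  field_simp

lemma condExpPart_decomp {α β : Type*} {N : ℕ} (π : ℕ → α) (π' : ℕ → β) (f : ℕ → ℝ)
    (href : ∀ x ∈ Finset.Icc 1 N, ∀ y ∈ Finset.Icc 1 N, π' x = π' y → π x = π y)
    {x : ℕ} (hx : x ∈ Finset.Icc 1 N) :
    condExpPart N π' f x = condExpPart N π f x
      + condExpPart N π' (fun n => f n - condExpPart N π f n) x := by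
  rw [condExpPart_sub, condExpPart_const_on_cell hx
    (fun y hy hxy => condExpPart_congr f (href y hy x hx hxy))]
  ring

lemma avg_sum {N : ℕ} (π : ℕ → ℕ) (u g : ℕ → ℝ)
    (hu : ∀ x ∈ Finset.Icc 1 N, ∀ y ∈ Finset.Icc 1 N, π x = π y → u x = u y) :
    ∑ x ∈ Finset.Icc 1 N, u x * condExpPart N π g x
      = ∑ x ∈ Finset.Icc 1 N, u x * g x := by
  classical
  set S := Finset.Icc 1 N with hS
  have step1 : ∑ x ∈ S, u x * condExpPart N π g x
      = ∑ x ∈ S, ∑ y ∈ S, (if π y = π x then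
          u x * g y / ((S.filter (fun z => π z = π x)).card : ℝ) else 0) := by
    refine Finset.sum_congr rfl fun x hx => ?_
    rw [← Finset.sum_filter, ← Finset.sum_div, ← Finset.mul_sum, mul_div_assoc]
    simp only [condExpPart, Finset.filter_congr_decidable, hS]
    congr
  rw [step1, Finset.sum_comm]
  refine Finset.sum_congr rfl fun y hy => ?_
  have hcy : (0:ℝ) < ((S.filter (fun z => π z = π y)).card : ℝ) :=
    Nat.cast_pos.mpr (Finset.card_pos.2 ⟨y, Finset.mem_filter.2 ⟨hy, rfl⟩⟩)
  have step2 : ∀ x ∈ S, (if π y = π x then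
        u x * g y / ((S.filter (fun z => π z = π x)).card : ℝ) else 0)
      = (if π x = π y then
        u y * g y / ((S.filter (fun z => π z = π y)).card : ℝ) else 0) := by
    intro x hx
    by_cases h : π x = π y
    · rw [if_pos h.symm, if_pos h, hu x hx y hy h, h]
    · rw [if_neg (fun hh => h hh.symm), if_neg h]
  rw [Finset.sum_congr rfl step2, ← Finset.sum_filter, Finset.sum_const, nsmul_eq_mul]
  field_simp

lemma abs_condExpPart_of_sign {α : Type*} {N : ℕ} {π' : ℕ → α} {g : ℕ → ℝ} {x : ℕ}
    (hsgn : ∀ y ∈ Finset.Icc 1 N, π' y = π' x → (0 ≤ g y ↔ 0 ≤ g x)) :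
    |condExpPart N π' g x| = condExpPart N π' (fun n => |g n|) x := by
  classical
  simp only [condExpPart]
  rw [abs_div, Nat.abs_cast]
  congr 1
  by_cases hgx : 0 ≤ g x
  · rw [_root_.abs_of_nonneg (Finset.sum_nonneg fun y hy =>
      (hsgn y (Finset.mem_filter.1 hy).1 (Finset.mem_filter.1 hy).2).2 hgx)]
    exact Finset.sum_congr rfl fun y hy => (_root_.abs_of_nonneg
      ((hsgn y (Finset.mem_filter.1 hy).1 (Finset.mem_filter.1 hy).2).2 hgx)).symm
  · rw [_root_.abs_of_nonpos (Finset.sum_nonpos fun y hy => le_of_lt (lt_of_not_ge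
      (fun h => hgx ((hsgn y (Finset.mem_filter.1 hy).1 (Finset.mem_filter.1 hy).2).1 h)))),
      ← Finset.sum_neg_distrib]
    exact Finset.sum_congr rfl fun y hy => (_root_.abs_of_nonpos (le_of_lt (lt_of_not_ge
      (fun h => hgx ((hsgn y (Finset.mem_filter.1 hy).1 (Finset.mem_filter.1 hy).2).1 h))))).symm

lemma energy_gain {N : ℕ} (hN : 0 < N) (π : ℕ → ℕ) (f : ℕ → ℝ) :
    ((1 / (N:ℝ)) * ∑ n ∈ Finset.Icc 1 N, |f n - condExpPart N π f n|) ^ 2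
      ≤ energy N (fun n => 2 * π n
          + (if 0 ≤ f n - condExpPart N π f n then 0 else 1)) f - energy N π f := by
  classical
  set S := Finset.Icc 1 N with hS
  set g : ℕ → ℝ := fun n => f n - condExpPart N π f n with hg
  set π' : ℕ → ℕ := fun n => 2 * π n + (if 0 ≤ g n then 0 else 1) with hπ'
  have href : ∀ x ∈ S, ∀ y ∈ S, π' x = π' y → π x = π y := by
    intro x _ y _ h
    simp only [hπ'] at h
    split_ifs at h <;> omega
  have hbit1 : ∀ x y : ℕ, π' x = π' y → (0 ≤ g x → 0 ≤ g y) := by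
    intro x y hpe hx0
    by_contra hy0
    simp only [hπ', if_pos hx0, if_neg hy0] at hpe
    omega
  have hbit : ∀ x y : ℕ, π' x = π' y → (0 ≤ g x ↔ 0 ≤ g y) :=
    fun x y hpe => ⟨hbit1 x y hpe, hbit1 y x hpe.symm⟩
  set h : ℕ → ℝ := fun x => condExpPart N π' g x with hh
  -- energy difference equals (1/N) * ∑ h²
  have hdiff : energy N π' f - energy N π f
      = (1 / (N:ℝ)) * ∑ x ∈ S, (h x) ^ 2 := by
    have hexp : ∀ x ∈ S, (condExpPart N π' f x) ^ 2
        = (condExpPart N π f x) ^ 2 + (2 * (condExpPart N π f x * h x) + (h x) ^ 2) := by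
      intro x hx
      rw [condExpPart_decomp π π' f href hx]
      ring
    have hcross : ∑ x ∈ S, condExpPart N π f x * h x = 0 := by
      have hu : ∀ x ∈ S, ∀ y ∈ S, π' x = π' y → condExpPart N π f x = condExpPart N π f y :=
        fun x hx y hy hxy => condExpPart_congr f (href x hx y hy hxy)
      have h1 : ∑ x ∈ S, condExpPart N π f x * h x
          = ∑ x ∈ S, condExpPart N π f x * g x := avg_sum π' _ g hu
      have hu2 : ∀ x ∈ S, ∀ y ∈ S, π x = π y → condExpPart N π f x = condExpPart N π f y :=
        fun x _ y _ hxy => condExpPart_congr f hxy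
      have h2 : ∑ x ∈ S, condExpPart N π f x * condExpPart N π g x
          = ∑ x ∈ S, condExpPart N π f x * g x := avg_sum π _ g hu2
      have h3 : ∑ x ∈ S, condExpPart N π f x * condExpPart N π g x = 0 := by
        refine Finset.sum_eq_zero fun x hx => ?_
        rw [condExpPart_sub_self f hx, mul_zero]
      rw [h1, ← h2, h3]
    unfold energy
    rw [← mul_sub, Finset.sum_congr rfl hexp, Finset.sum_add_distrib]
    have hinner : ∑ x ∈ S, (2 * (condExpPart N π f x * h x) + h x ^ 2)
        = ∑ x ∈ S, h x ^ 2 := by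
      rw [Finset.sum_add_distrib, ← Finset.mul_sum, hcross, mul_zero, zero_add]
    rw [hinner]
    ring_nf
    rw [← hS]
    ring
  have habs : ∑ x ∈ S, |h x| = ∑ x ∈ S, |g x| := by
    have hpt : ∀ x ∈ S, |h x| = condExpPart N π' (fun n => |g n|) x := fun x hx =>
      abs_condExpPart_of_sign (fun y _ hxy => hbit y x hxy)
    rw [Finset.sum_congr rfl hpt]
    have h2 := avg_sum (N := N) π' (fun _ => (1:ℝ)) (fun n => |g n|)
      (fun _ _ _ _ _ => rfl)
    simpa using h2
  have hCS : (∑ x ∈ S, |h x|) ^ 2 ≤ (N:ℝ) * ∑ x ∈ S, (h x) ^ 2 := by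
    have h3 := sq_sum_le_card_mul_sum_sq (s := S) (f := fun x => |h x|)
    simp only [_root_.sq_abs] at h3
    have hcard : (S.card : ℝ) = (N : ℝ) := by
      rw [hS, Nat.card_Icc]; norm_num
    rw [hcard] at h3
    exact h3
  have hN' : (0:ℝ) < N := by exact_mod_cast hN
  rw [hdiff]
  show ((1 / (N:ℝ)) * ∑ n ∈ S, |g n|) ^ 2 ≤ (1 / (N:ℝ)) * ∑ x ∈ S, (h x) ^ 2
  rw [← habs]
  calc ((1 / (N:ℝ)) * ∑ x ∈ S, |h x|) ^ 2
      = (∑ x ∈ S, |h x|) ^ 2 / (N:ℝ) ^ 2 := by ring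
    _ ≤ ((N:ℝ) * ∑ x ∈ S, (h x) ^ 2) / (N:ℝ) ^ 2 := by
        gcongr
    _ = (1 / (N:ℝ)) * ∑ x ∈ S, (h x) ^ 2 := by
        field_simp

lemma abs_condExpPart_le {α : Type*} {N : ℕ} {π : ℕ → α} {f : ℕ → ℝ}
    (hf : ∀ n ∈ Finset.Icc 1 N, |f n| ≤ 1) (x : ℕ) :
    |condExpPart N π f x| ≤ 1 := by
  classical
  simp only [condExpPart]
  rw [abs_div, Nat.abs_cast]
  rcases Nat.eq_zero_or_pos ((Finset.Icc 1 N).filter (fun y => π y = π x)).card with h | h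
  · rw [h]
    simp
  · rw [div_le_one (by exact_mod_cast h)]
    calc |∑ y ∈ (Finset.Icc 1 N).filter (fun y => π y = π x), f y|
        ≤ ∑ y ∈ (Finset.Icc 1 N).filter (fun y => π y = π x), |f y| :=
          Finset.abs_sum_le_sum_abs _ _
      _ ≤ ∑ y ∈ (Finset.Icc 1 N).filter (fun y => π y = π x), 1 :=
          Finset.sum_le_sum fun y hy => hf y (Finset.mem_filter.1 hy).1
      _ = (((Finset.Icc 1 N).filter (fun y => π y = π x)).card : ℝ) := by
          rw [Finset.sum_const, nsmul_eq_mul, mul_one]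

theorem energy_increment (δ : ℝ) (hδ : 0 < δ) :
    ∃ c : ℝ, 0 < c ∧ ∀ (N M : ℕ) (π : ℕ → ℕ) (f : ℕ → ℝ), 0 < N →
      ((Finset.Icc 1 N).image π).card ≤ M →
      (∀ n ∈ Finset.Icc 1 N, f n ∈ Set.Icc (-1 : ℝ) 1) →
      δ ≤ U2N N (fun n => ((f n - condExpPart N π f n : ℝ) : ℂ)) →
      ∃ π' : ℕ → ℕ,
        (∀ x ∈ Finset.Icc 1 N, ∀ y ∈ Finset.Icc 1 N, π' x = π' y → π x = π y) ∧
        ((Finset.Icc 1 N).image π').card ≤ 2 * M ∧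
        c ≤ energy N π' f - energy N π f := by
  classical
  refine ⟨(δ^4/8192)^2, by positivity, ?_⟩
  intro N M π f hN hcard hf hU
  set g : ℕ → ℝ := fun n => f n - condExpPart N π f n with hg
  set π' : ℕ → ℕ := fun n => 2 * π n + (if 0 ≤ g n then 0 else 1) with hπ'
  have href : ∀ x ∈ Finset.Icc 1 N, ∀ y ∈ Finset.Icc 1 N, π' x = π' y → π x = π y := by
    intro x _ y _ h
    simp only [hπ'] at h
    split_ifs at h <;> omega
  refine ⟨π', href, ?_, ?_⟩
  · -- cardinality bound
    have hsub : (Finset.Icc 1 N).image π'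
        ⊆ ((Finset.Icc 1 N).image π).image (fun m => 2*m)
          ∪ ((Finset.Icc 1 N).image π).image (fun m => 2*m+1) := by
      intro x hx
      rw [Finset.mem_image] at hx
      obtain ⟨n, hn, rfl⟩ := hx
      by_cases h0 : 0 ≤ g n
      · refine Finset.mem_union_left _ ?_
        refine Finset.mem_image.2 ⟨π n, Finset.mem_image_of_mem _ hn, ?_⟩
        simp [hπ', if_pos h0]
      · refine Finset.mem_union_right _ ?_
        refine Finset.mem_image.2 ⟨π n, Finset.mem_image_of_mem _ hn, ?_⟩
        simp [hπ', if_neg h0]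
    calc ((Finset.Icc 1 N).image π').card
        ≤ (((Finset.Icc 1 N).image π).image (fun m => 2*m)
          ∪ ((Finset.Icc 1 N).image π).image (fun m => 2*m+1)).card :=
          Finset.card_le_card hsub
      _ ≤ (((Finset.Icc 1 N).image π).image (fun m => 2*m)).card
          + (((Finset.Icc 1 N).image π).image (fun m => 2*m+1)).card :=
          Finset.card_union_le _ _
      _ ≤ ((Finset.Icc 1 N).image π).card + ((Finset.Icc 1 N).image π).card :=
          Nat.add_le_add (Finset.card_image_le) (Finset.card_image_le)
      _ ≤ 2 * M := by omega
  · -- energy increment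
    have hfabs : ∀ n ∈ Finset.Icc 1 N, |f n| ≤ 1 := by
      intro n hn
      have := hf n hn
      rw [Set.mem_Icc] at this
      exact abs_le.2 ⟨this.1, this.2⟩
    have hgb : ∀ n ∈ Finset.Icc 1 N, |g n| ≤ 2 := by
      intro n hn
      have h1 := hfabs n hn
      have h2 := abs_condExpPart_le (π := π) hfabs n
      calc |g n| = |f n - condExpPart N π f n| := rfl
        _ ≤ |f n| + |condExpPart N π f n| := abs_sub _ _
        _ ≤ 2 := by linarith
    have hl1 : δ^4 / 8192 ≤ (1 / (N:ℝ)) * ∑ n ∈ Finset.Icc 1 N, |g n| :=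
      l1_lower hN hδ hgb hU
    have hgain := energy_gain hN π f
    have hsq : (δ^4/8192)^2 ≤ ((1 / (N:ℝ)) * ∑ n ∈ Finset.Icc 1 N, |g n|)^2 :=
      pow_le_pow_left₀ (by positivity) hl1 2
    calc (δ^4/8192)^2 ≤ ((1 / (N:ℝ)) * ∑ n ∈ Finset.Icc 1 N, |g n|)^2 := hsq
      _ ≤ energy N π' f - energy N π f := hgain
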